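/- Let n ≥ 0 be an integer. Then K_∞⟨t⟩ = (t−θ)^{−n}·𝔽[θ,t] + {g − (t−θ)^{−n} g^{(1)} : g ∈ K_∞⟨t⟩}; that is, every f ∈ K_∞⟨t⟩ can be written as f = (t−θ)^{−n} p + (g − (t−θ)^{−n} g^{(1)}) with p ∈ 𝔽[θ,t] and g ∈ K_∞⟨t⟩. (Equivalently: the class module Cl(A(n)) of the n-th Carlitz twist is trivial for n ≥ 0.) -/

import Mathlib

set_option linter.unusedSectionVars false
set_option linter.unusedTactic false
set_option maxHeartbeats 1000000


open scoped Classical ENNReal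
open Filter Topology
open scoped Multiplicative

noncomputable section

namespace Carlitz

variable (F : Type) [Field F] [Fintype F]

/-- `K∞ = 𝔽((1/θ))`, realized as the field of formal Laurent series over `F`;
the Laurent-series variable plays the role of `1/θ`. -/
abbrev Kinf := LaurentSeries F

/-- `θ ∈ K∞`, the inverse of the Laurent-series variable. -/
def theta : Kinf F := HahnSeries.single (-1 : ℤ) (1 : F)

/-- The absolute value `|x| = q ^ (deg_θ x)`, with values in `ℝ≥0∞`. -/
def Kabs {R : Type} [Zero R] (q : ℕ) (x : HahnSeries ℤ R) : ℝ≥0∞ :=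
  if x = 0 then 0 else (q : ℝ≥0∞) ^ (-x.order)

/-- The ambient ring of the Tate algebra: formal power series in `t` over `K∞`. -/
abbrev TS := PowerSeries (Kinf F)

/-- The `i`-th `t`-coefficient. -/
def coeffT (i : ℕ) (f : TS F) : Kinf F := PowerSeries.coeff (R := Kinf F) i f

/-- Membership in the Tate algebra `K∞⟨t⟩`: the coefficients tend to `0`. -/
def IsTate (f : TS F) : Prop :=
  Tendsto (fun i => Kabs (Fintype.card F) (coeffT F i f)) atTop (nhds 0)

/-- The Gauss norm `‖f‖ = sup_i |a_i|`. -/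
def gnorm (f : TS F) : ℝ≥0∞ := ⨆ i, Kabs (Fintype.card F) (coeffT F i f)

/-- The twist `f ↦ f⁽¹⁾`: the coefficientwise `q`-power Frobenius. -/
def twist (f : TS F) : TS F := PowerSeries.mk fun i => coeffT F i f ^ Fintype.card F

/-- The iterated twist `f ↦ f⁽ᵏ⁾`. -/
def twistIter (k : ℕ) (f : TS F) : TS F := (twist F)^[k] f

/-- The variable `t` of the Tate algebra. -/
def tt : TS F := PowerSeries.X

/-- `θ`, viewed as a constant of `K∞⟨t⟩`. -/
def th : TS F := PowerSeries.C (R := Kinf F) (theta F)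

/-- The embedding `𝔽[θ] → K∞` sending the polynomial variable to `θ`. -/
def polyK : Polynomial F →+* Kinf F :=
  Polynomial.eval₂RingHom (HahnSeries.C : F →+* Kinf F) (theta F)

/-- The embedding `𝔽[θ][t] → K∞⟨t⟩`: the outer variable goes to `t`,
the inner variable goes to `θ`. -/
def polyT : Polynomial (Polynomial F) →+* TS F :=
  Polynomial.eval₂RingHom ((PowerSeries.C (R := Kinf F)).comp (polyK F)) PowerSeries.X

/-- The subring `𝔽[θ,t] ⊆ K∞⟨t⟩`. -/
def PolyTT : Set (TS F) := Set.range (polyT F)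

/-- The subset of `𝔽[θ,t]` of elements of `θ`-degree `< n`. -/
def PolyDegLt (n : ℕ) : Set (TS F) :=
  {f | ∃ P : Polynomial (Polynomial F), (∀ i, (P.coeff i).degree < (n : ℕ)) ∧ f = polyT F P}

/-- The action of `𝔽[t]` on `K∞⟨t⟩`: `a • f` is `actT a * f`. -/
def actT : Polynomial F →+* TS F :=
  Polynomial.eval₂RingHom ((PowerSeries.C (R := Kinf F)).comp (HahnSeries.C : F →+* Kinf F))
    PowerSeries.X

/-- Convergence in `K∞⟨t⟩` with respect to the Gauss norm:
`L` is the limit of the sequence `s`. -/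
def TT (s : ℕ → TS F) (L : TS F) : Prop :=
  Tendsto (fun N => gnorm F (L - s N)) atTop (nhds 0)

/-- Convergence in `K∞`: `L` is the limit of the sequence `s`. -/
def KT (q : ℕ) (s : ℕ → Kinf F) (L : Kinf F) : Prop :=
  Tendsto (fun N => Kabs q (L - s N)) atTop (nhds 0)

/-- Partial products defining `ν_n = (−θ)^{−h} ∏_{j≥0} (1 − t·θ^{−qʲ})ⁿ`,
where `n = h(q−1) + δ`. -/
def nuPartial (n h N : ℕ) : TS F :=
  PowerSeries.C (R := Kinf F) ((-theta F)⁻¹ ^ h) *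
    ∏ j ∈ Finset.range N,
      (1 - tt F * PowerSeries.C (R := Kinf F) ((theta F)⁻¹ ^ Fintype.card F ^ j)) ^ n

/-- Partial products defining `ω_n = (−θ)^m ∏_{i≥0} (1 − t·θ^{−qⁱ})^{−n}`,
where `n = m(q−1)`; `ω_n` is the `n`-th power of the Anderson–Thakur function. -/
def omegaPartial (n m N : ℕ) : TS F :=
  PowerSeries.C (R := Kinf F) ((-theta F) ^ m) *
    ∏ i ∈ Finset.range N,
      ((1 - tt F * PowerSeries.C (R := Kinf F) ((theta F)⁻¹ ^ Fintype.card F ^ i)) ^ n)⁻¹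

/-- Partial sums defining `ξ_e = ∑_{k≥0} e⁽ᵏ⁾ ∏_{i=0}^{k} (t−θ^{qⁱ})^{−n}`. -/
def xiPartial (n : ℕ) (e : TS F) (N : ℕ) : TS F :=
  ∑ k ∈ Finset.range N, twistIter F k e *
    (∏ i ∈ Finset.range (k + 1),
      (tt F - PowerSeries.C (R := Kinf F) (theta F ^ Fintype.card F ^ i)) ^ n)⁻¹

/-- Partial sums defining `s_h = h + ∑_{i≥1} h⁽ⁱ⁾ ∏_{j=0}^{i−1} (t−θ^{qʲ})^{−n}`. -/
def sPartial (n : ℕ) (h : TS F) (N : ℕ) : TS F :=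
  ∑ i ∈ Finset.range N, twistIter F i h *
    (∏ j ∈ Finset.range i,
      (tt F - PowerSeries.C (R := Kinf F) (theta F ^ Fintype.card F ^ j)) ^ n)⁻¹

/-- The map `β : f ↦ f − (t−θ)ⁿ f⁽¹⁾`. -/
def beta (n : ℕ) (f : TS F) : TS F := f - (tt F - th F) ^ n * twist F f

/-- The set of integral extension representatives
`X_n = {ξ ∈ K∞⟨t⟩ : (t−θ)ⁿ ξ − ξ⁽¹⁾ ∈ 𝔽[θ,t]}`. -/
def Xset (n : ℕ) : Set (TS F) :=
  {ξ | IsTate F ξ ∧ (tt F - th F) ^ n * ξ - twist F ξ ∈ PolyTT F}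

-- ===== auxiliary development =====
section Aux
/-- `vle x m` means `|x| ≤ q^{-m}`. -/
def vle (x : Kinf F) (m : ℤ) : Prop := ∀ d < m, x.coeff d = 0

variable {F}

lemma vle_zero (m : ℤ) : vle F (0 : Kinf F) m := fun _ _ => rfl

lemma vle_of_le {x : Kinf F} {m m' : ℤ} (h : vle F x m) (hm : m' ≤ m) : vle F x m' :=
  fun d hd => h d (lt_of_lt_of_le hd hm)

lemma vle_iff_order {x : Kinf F} (hx : x ≠ 0) {m : ℤ} : vle F x m ↔ m ≤ x.order := by
  constructor
  · intro h
    by_contra hc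
    exact (mt HahnSeries.coeff_order_eq_zero.mp hx) (h _ (not_le.mp hc))
  · intro h d hd
    exact HahnSeries.coeff_eq_zero_of_lt_order (lt_of_lt_of_le hd h)

lemma vle_order (x : Kinf F) : vle F x x.order := by
  rcases eq_or_ne x 0 with rfl | hx
  · exact vle_zero _
  · exact (vle_iff_order hx).mpr le_rfl

lemma vle_add {x y : Kinf F} {m : ℤ} (hx : vle F x m) (hy : vle F y m) : vle F (x + y) m :=
  fun d hd => by rw [HahnSeries.coeff_add, hx d hd, hy d hd, add_zero]

lemma vle_neg {x : Kinf F} {m : ℤ} (hx : vle F x m) : vle F (-x) m :=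
  fun d hd => by rw [HahnSeries.coeff_neg, hx d hd, neg_zero]

lemma vle_sub {x y : Kinf F} {m : ℤ} (hx : vle F x m) (hy : vle F y m) : vle F (x - y) m := by
  rw [sub_eq_add_neg]; exact vle_add hx (vle_neg hy)

lemma vle_sum {α : Type*} {s : Finset α} {g : α → Kinf F} {m : ℤ}
    (h : ∀ a ∈ s, vle F (g a) m) : vle F (∑ a ∈ s, g a) m := by
  classical
  induction s using Finset.induction_on with
  | empty => simpa using vle_zero m
  | insert _ _ hnot ih =>
    rw [Finset.sum_insert hnot]
    exact vle_add (h _ (Finset.mem_insert_self _ _))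
      (ih fun a ha => h a (Finset.mem_insert_of_mem ha))

lemma vle_mul {x y : Kinf F} {a b : ℤ} (hx : vle F x a) (hy : vle F y b) :
    vle F (x * y) (a + b) := by
  rcases eq_or_ne x 0 with rfl | hx0
  · simpa using vle_zero (a + b)
  rcases eq_or_ne y 0 with rfl | hy0
  · simpa using vle_zero (a + b)
  rw [vle_iff_order (mul_ne_zero hx0 hy0), HahnSeries.order_mul hx0 hy0]
  exact add_le_add ((vle_iff_order hx0).mp hx) ((vle_iff_order hy0).mp hy)

lemma vle_one : vle F (1 : Kinf F) 0 := by
  intro d hd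
  have : (1 : Kinf F) = HahnSeries.single (0 : ℤ) (1 : F) := HahnSeries.single_zero_one.symm
  rw [this, HahnSeries.coeff_single]
  simp [ne_of_lt hd]

lemma vle_pow {x : Kinf F} {a : ℤ} (hx : vle F x a) (k : ℕ) : vle F (x ^ k) ((k : ℤ) * a) := by
  induction k with
  | zero => simpa using vle_one
  | succ k ih =>
      have h2 := vle_mul ih hx
      have h3 : ((k : ℤ) + 1) * a = (k : ℤ) * a + a := by ring
      rw [pow_succ, Nat.cast_add, Nat.cast_one, h3]
      exact h2

lemma vle_single (a : ℤ) (r : F) : vle F (HahnSeries.single a r) a := by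
  intro d hd
  rw [HahnSeries.coeff_single]
  simp [ne_of_lt hd]

-- theta facts
lemma theta_ne_zero : theta F ≠ 0 := HahnSeries.single_ne_zero one_ne_zero

lemma theta_pow (k : ℕ) : theta F ^ k = HahnSeries.single (-(k : ℤ)) (1 : F) := by
  induction k with
  | zero => simp [HahnSeries.single_zero_one]
  | succ k ih =>
      rw [pow_succ, ih, theta, HahnSeries.single_mul_single]
      norm_num
      congr 1
      push_cast; ring

lemma theta_pow_inv (k : ℕ) : (theta F ^ k)⁻¹ = HahnSeries.single (k : ℤ) (1 : F) := by
  apply inv_eq_of_mul_eq_one_right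
  rw [theta_pow, HahnSeries.single_mul_single]
  norm_num [HahnSeries.single_zero_one]

lemma theta_pow_ne_zero (k : ℕ) : theta F ^ k ≠ 0 := pow_ne_zero _ theta_ne_zero

lemma vle_theta_pow_inv (k : ℕ) : vle F (theta F ^ k)⁻¹ (k : ℤ) := by
  rw [theta_pow_inv]; exact vle_single _ _

-- Frobenius
lemma exists_frobq : ∃ φ : Kinf F →+* Kinf F, ∀ x, φ x = x ^ Fintype.card F := by
  classical
  haveI : CharP F (ringChar F) := ringChar.charP F
  obtain ⟨n, hp, hcard⟩ := FiniteField.card F (ringChar F)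
  haveI : Fact (Nat.Prime (ringChar F)) := ⟨hp⟩
  haveI : CharP (Kinf F) (ringChar F) :=
    charP_of_injective_ringHom (HahnSeries.C_injective (Γ := ℤ) (R := F)) (ringChar F)
  refine ⟨iterateFrobenius (Kinf F) (ringChar F) n, fun x => ?_⟩
  rw [iterateFrobenius_def, hcard]

variable (F) in
def frobq : Kinf F →+* Kinf F := (exists_frobq (F := F)).choose

lemma frobq_apply (x : Kinf F) : frobq F x = x ^ Fintype.card F :=
  (exists_frobq (F := F)).choose_spec x

-- ===== twist as a ring hom =====
lemma twist_eq_map (f : TS F) : twist F f = PowerSeries.map (frobq F) f := by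
  refine PowerSeries.ext fun i => ?_
  rw [twist, PowerSeries.coeff_mk, PowerSeries.coeff_map, frobq_apply]
  rfl

lemma coeff_twist (i : ℕ) (f : TS F) :
    PowerSeries.coeff (R := Kinf F) i (twist F f) = (PowerSeries.coeff (R := Kinf F) i f) ^ Fintype.card F :=
  PowerSeries.coeff_mk _ _

lemma twist_mul (a b : TS F) : twist F (a * b) = twist F a * twist F b := by
  simp [twist_eq_map, map_mul]

lemma twist_one : twist F (1 : TS F) = 1 := by simp [twist_eq_map]

lemma twist_sub (a b : TS F) : twist F (a - b) = twist F a - twist F b := by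
  simp [twist_eq_map, map_sub]

lemma twist_pow (a : TS F) (k : ℕ) : twist F (a ^ k) = twist F a ^ k := by
  simp [twist_eq_map, map_pow]

lemma twist_prod {α : Type*} (s : Finset α) (g : α → TS F) :
    twist F (∏ a ∈ s, g a) = ∏ a ∈ s, twist F (g a) := by
  simp [twist_eq_map, map_prod]

lemma twist_tt : twist F (tt F) = tt F := by
  rw [twist_eq_map, tt, PowerSeries.map_X]

lemma twist_C (c : Kinf F) :
    twist F (PowerSeries.C (R := Kinf F) c) = PowerSeries.C (R := Kinf F) (c ^ Fintype.card F) := by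
  rw [twist_eq_map, PowerSeries.map_C, frobq_apply]

-- ===== the explicit inverse of `t - c` =====
variable (F) in
/-- The inverse of `t - c` in `K∞⟦t⟧`, for `|c| > 1`. -/
def winv (c : Kinf F) : TS F := PowerSeries.mk fun j => -(c⁻¹ ^ (j + 1))

lemma winv_mul {c : Kinf F} (hc : c ≠ 0) :
    (tt F - PowerSeries.C (R := Kinf F) c) * winv F c = 1 := by
  refine PowerSeries.ext fun n => ?_
  rw [sub_mul]
  cases n with
  | zero =>
      simp only [map_sub, PowerSeries.coeff_zero_X_mul, tt, PowerSeries.coeff_C_mul,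
        winv, PowerSeries.coeff_mk, PowerSeries.coeff_one, if_pos rfl, zero_sub]
      norm_num
      linear_combination mul_inv_cancel₀ hc
  | succ n =>
      simp only [map_sub, tt, PowerSeries.coeff_succ_X_mul, PowerSeries.coeff_C_mul,
        winv, PowerSeries.coeff_mk, PowerSeries.coeff_one, if_neg (Nat.succ_ne_zero n)]
      have hcc : c * c⁻¹ = 1 := mul_inv_cancel₀ hc
      linear_combination (c⁻¹ ^ (n + 1)) * hcc

lemma twist_winv {c : Kinf F} :
    twist F (winv F c) = winv F (c ^ Fintype.card F) := by
  refine PowerSeries.ext fun j => ?_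
  rw [coeff_twist, winv, winv, PowerSeries.coeff_mk, PowerSeries.coeff_mk, ← frobq_apply,
    ← frobq_apply, map_neg, map_pow, map_inv₀]

-- ===== coefficient bounds for power series =====
variable (F) in
/-- `Bddc x m`: the `j`-th coefficient of `x` satisfies `|x_j| ≤ q^{-(j+m)}`. -/
def Bddc (x : TS F) (m : ℤ) : Prop :=
  ∀ j : ℕ, vle F (PowerSeries.coeff (R := Kinf F) j x) ((j : ℤ) + m)

lemma Bddc_mono {x : TS F} {m m' : ℤ} (h : Bddc F x m) (hm : m' ≤ m) : Bddc F x m' :=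
  fun j => vle_of_le (h j) (by linarith)

lemma Bddc_mul {x y : TS F} {a b : ℤ} (hx : Bddc F x a) (hy : Bddc F y b) :
    Bddc F (x * y) (a + b) := by
  intro j
  rw [PowerSeries.coeff_mul]
  refine vle_sum fun pq hpq => ?_
  have hj : pq.1 + pq.2 = j := Finset.HasAntidiagonal.mem_antidiagonal.mp hpq
  refine vle_of_le (vle_mul (hx pq.1) (hy pq.2)) ?_
  have : ((pq.1 : ℤ) + (pq.2 : ℤ)) = (j : ℤ) := by exact_mod_cast congrArg Nat.cast hj
  linarith

lemma Bddc_one {m : ℤ} (hm : m ≤ 0) : Bddc F (1 : TS F) m := by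
  intro j
  rw [PowerSeries.coeff_one]
  split_ifs with h
  · subst h
    exact vle_of_le vle_one (by simpa using hm)
  · exact vle_zero _

lemma Bddc_pow {x : TS F} {a : ℤ} (hx : Bddc F x a) (k : ℕ) : Bddc F (x ^ k) ((k : ℤ) * a) := by
  induction k with
  | zero => exact Bddc_one (by simp)
  | succ k ih =>
      have h2 := Bddc_mul ih hx
      have h3 : ((k : ℤ) + 1) * a = (k : ℤ) * a + a := by ring
      rw [pow_succ, Nat.cast_add, Nat.cast_one, h3]
      exact h2

lemma Bddc_X_sub_C {c : Kinf F} (hc : vle F c (-1)) :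
    Bddc F (tt F - PowerSeries.C (R := Kinf F) c) (-1) := by
  intro j
  rw [map_sub, tt, PowerSeries.coeff_X, PowerSeries.coeff_C]
  match j with
  | 0 => simpa using vle_neg hc
  | 1 => simpa using vle_of_le vle_one (by norm_num)
  | (m+2) =>
      norm_num
      exact vle_zero _

lemma Bddc_u (n : ℕ) : Bddc F ((tt F - th F) ^ n) (-(n : ℤ)) := by
  have h := Bddc_pow (Bddc_X_sub_C (c := theta F) (vle_single _ _)) n
  simpa [th] using h

-- polynomial degree (in t) bounds
variable (F) in
def DegLe (x : TS F) (D : ℕ) : Prop := ∀ j : ℕ, D < j → PowerSeries.coeff (R := Kinf F) j x = 0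

lemma DegLe_mul {x y : TS F} {a b : ℕ} (hx : DegLe F x a) (hy : DegLe F y b) :
    DegLe F (x * y) (a + b) := by
  intro j hj
  rw [PowerSeries.coeff_mul]
  refine Finset.sum_eq_zero fun pq hpq => ?_
  have hj' : pq.1 + pq.2 = j := Finset.HasAntidiagonal.mem_antidiagonal.mp hpq
  rcases lt_or_ge a pq.1 with h | h
  · rw [hx _ h, zero_mul]
  · rw [hy _ (by omega), mul_zero]

lemma DegLe_pow {x : TS F} {a : ℕ} (hx : DegLe F x a) (k : ℕ) : DegLe F (x ^ k) (k * a) := by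
  induction k with
  | zero =>
      intro j hj
      rw [pow_zero, PowerSeries.coeff_one, if_neg (by omega)]
  | succ k ih =>
      have h2 := DegLe_mul ih hx
      have h3 : (k + 1) * a = k * a + a := by ring
      rw [pow_succ, h3]
      exact h2

lemma DegLe_u (n : ℕ) : DegLe F ((tt F - th F) ^ n) n := by
  have h : DegLe F (tt F - th F) 1 := by
    intro j hj
    rw [map_sub, tt, th, PowerSeries.coeff_X, PowerSeries.coeff_C, if_neg (by omega),
      if_neg (by omega), sub_zero]
  simpa using DegLe_pow h n

-- ===== the products W_k =====
variable (F) in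
def Wk (n k : ℕ) : TS F :=
  ∏ i ∈ Finset.range (k + 1), winv F (theta F ^ Fintype.card F ^ i) ^ n

variable (F) in
def Uk (n k : ℕ) : TS F :=
  ∏ i ∈ Finset.range (k + 1),
    (tt F - PowerSeries.C (R := Kinf F) (theta F ^ Fintype.card F ^ i)) ^ n

lemma Uk_mul_Wk (n k : ℕ) : Uk F n k * Wk F n k = 1 := by
  rw [Uk, Wk, ← Finset.prod_mul_distrib]
  refine Finset.prod_eq_one fun i _ => ?_
  rw [← mul_pow, winv_mul (theta_pow_ne_zero _), one_pow]

lemma Bddc_winv_theta (i : ℕ) : Bddc F (winv F (theta F ^ Fintype.card F ^ i)) 0 := by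
  intro j
  rw [winv, PowerSeries.coeff_mk]
  refine vle_neg (vle_of_le (vle_pow (vle_theta_pow_inv _) (j + 1)) ?_)
  have h1 : (1 : ℤ) ≤ (Fintype.card F : ℤ) ^ i := by
    exact_mod_cast Nat.one_le_pow _ _ Fintype.card_pos
  push_cast
  nlinarith [mul_le_mul_of_nonneg_left h1 (by positivity : (0:ℤ) ≤ (j:ℤ)+1)]

lemma Bddc_Wk (n k : ℕ) : Bddc F (Wk F n k) 0 := by
  rw [Wk]
  have : ∀ N : ℕ, Bddc F (∏ i ∈ Finset.range N, winv F (theta F ^ Fintype.card F ^ i) ^ n) 0 := by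
    intro N
    induction N with
    | zero => simpa using Bddc_one le_rfl
    | succ N ih =>
        rw [Finset.prod_range_succ]
        have h2 := Bddc_mul ih (by simpa using Bddc_pow (Bddc_winv_theta N) n)
        simpa using h2
  exact this (k + 1)

lemma mul_eq_one_unique {a x y : TS F} (hx : a * x = 1) (hy : a * y = 1) : x = y := by
  calc x = (a * y) * x := by rw [hy, one_mul]
  _ = y * (a * x) := by ring
  _ = y := by rw [hx, mul_one]

lemma th_eq : th F = PowerSeries.C (R := Kinf F) (theta F ^ Fintype.card F ^ 0) := by
  rw [pow_zero, pow_one, th]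

lemma twist_Wk (n k : ℕ) : twist F (Wk F n k) = (tt F - th F) ^ n * Wk F n (k + 1) := by
  have hTW : twist F (Wk F n k)
      = ∏ i ∈ Finset.range (k + 1), winv F (theta F ^ Fintype.card F ^ (i + 1)) ^ n := by
    rw [Wk, twist_prod]
    refine Finset.prod_congr rfl fun i _ => ?_
    rw [twist_pow, twist_winv, ← pow_mul, ← pow_succ]
  set A : TS F := ∏ i ∈ Finset.range (k + 1),
      (tt F - PowerSeries.C (R := Kinf F) (theta F ^ Fintype.card F ^ (i + 1))) ^ n with hA
  have h1 : A * twist F (Wk F n k) = 1 := by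
    rw [hTW, ← Finset.prod_mul_distrib]
    refine Finset.prod_eq_one fun i _ => ?_
    rw [← mul_pow, winv_mul (theta_pow_ne_zero _), one_pow]
  have hUk : Uk F n (k + 1) = (tt F - th F) ^ n * A := by
    rw [Uk, Finset.prod_range_succ', th_eq, mul_comm]
  have h2 : A * ((tt F - th F) ^ n * Wk F n (k + 1)) = 1 := by
    rw [← mul_assoc, mul_comm A, ← hUk, Uk_mul_Wk]
  exact mul_eq_one_unique h1 h2

-- ===== Kabs and vle =====
lemma q_one_lt : (1 : ℝ≥0∞) < (Fintype.card F : ℝ≥0∞) := by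
  exact_mod_cast Nat.one_lt_cast.mpr Fintype.one_lt_card

lemma q_ne_zero : (Fintype.card F : ℝ≥0∞) ≠ 0 := by
  positivity

lemma q_ne_top : (Fintype.card F : ℝ≥0∞) ≠ ⊤ := ENNReal.natCast_ne_top _

lemma q_zpow_lt {a b : ℤ} (h : a < b) :
    (Fintype.card F : ℝ≥0∞) ^ a < (Fintype.card F : ℝ≥0∞) ^ b := by
  set q : ℝ≥0∞ := (Fintype.card F : ℝ≥0∞)
  have h0 : q ≠ 0 := q_ne_zero (F := F)
  have ht : q ≠ ⊤ := q_ne_top (F := F)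
  have h1 : q ^ a * 1 < q ^ a * q := by
    refine ENNReal.mul_lt_mul_right (a := q ^ a) ?_ ?_ ?_
    · exact (ENNReal.zpow_pos h0 ht a).ne'
    · exact ENNReal.zpow_lt_top h0 ht a |>.ne
    · exact q_one_lt (F := F)
  have h2 : q ^ a * q = q ^ (a + 1) := by
    rw [ENNReal.zpow_add h0 ht a 1, zpow_one]
  calc q ^ a = q ^ a * 1 := (mul_one _).symm
  _ < q ^ (a + 1) := by rw [← h2]; exact h1
  _ ≤ q ^ b := ENNReal.zpow_le_of_le (le_of_lt (q_one_lt (F := F))) (by omega)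

lemma q_zpow_le_iff {a b : ℤ} :
    (Fintype.card F : ℝ≥0∞) ^ a ≤ (Fintype.card F : ℝ≥0∞) ^ b ↔ a ≤ b := by
  constructor
  · intro h
    by_contra hc
    exact absurd h (not_le.mpr (q_zpow_lt (not_le.mp hc)))
  · exact fun h => ENNReal.zpow_le_of_le (le_of_lt (q_one_lt (F := F))) h

lemma kabs_le_iff {x : Kinf F} {m : ℤ} :
    Kabs (Fintype.card F) x ≤ (Fintype.card F : ℝ≥0∞) ^ (-m) ↔ vle F x m := by
  rcases eq_or_ne x 0 with rfl | hx
  · simp only [Kabs, if_pos rfl]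
    constructor
    · intro _; exact vle_zero m
    · intro _; exact zero_le
  · rw [Kabs, if_neg hx, q_zpow_le_iff, neg_le_neg_iff, vle_iff_order hx]

lemma kabs_pos_exp_le {m : ℕ} :
    (Fintype.card F : ℝ≥0∞) ^ (-(m : ℤ)) ≤ 2⁻¹ ^ m := by
  have h2q : (2 : ℝ≥0∞) ≤ (Fintype.card F : ℝ≥0∞) := by
    exact_mod_cast Nat.cast_le.mpr Fintype.one_lt_card
  rw [ENNReal.zpow_neg, zpow_natCast,
    ENNReal.inv_pow]
  exact pow_le_pow_left₀ zero_le (ENNReal.inv_le_inv.mpr h2q) m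

lemma q_zpow_pos (m : ℤ) : (0 : ℝ≥0∞) < (Fintype.card F : ℝ≥0∞) ^ m :=
  ENNReal.zpow_pos (q_ne_zero (F := F)) (q_ne_top (F := F)) m

lemma isTate_iff_vle {f : TS F} :
    IsTate F f ↔ ∀ m : ℕ, ∀ᶠ i in atTop, vle F (coeffT F i f) (m : ℤ) := by
  constructor
  · intro h m
    have := (ENNReal.tendsto_nhds_zero.mp h) ((Fintype.card F : ℝ≥0∞) ^ (-(m : ℤ)))
      (q_zpow_pos _)
    exact this.mono fun i hi => kabs_le_iff.mp hi
  · intro h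
    rw [IsTate, ENNReal.tendsto_nhds_zero]
    intro ε hε
    obtain ⟨m, hm⟩ := ENNReal.exists_inv_two_pow_lt hε.ne'
    refine (h m).mono fun i hi => ?_
    calc Kabs (Fintype.card F) (coeffT F i f) ≤ (Fintype.card F : ℝ≥0∞) ^ (-(m : ℤ)) :=
        kabs_le_iff.mpr hi
    _ ≤ 2⁻¹ ^ m := kabs_pos_exp_le
    _ ≤ ε := le_of_lt hm

-- ===== the valued topology on `K∞` =====
lemma vle_iff_v {x : Kinf F} {m : ℤ} :
    vle F x m ↔ Valued.v x ≤ WithZero.exp (-m) :=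
  Iff.symm (LaurentSeries.valuation_le_iff_coeff_lt_eq_zero F)

instance : NonarchimedeanAddGroup (Kinf F) := by
  constructor
  intro U hU
  obtain ⟨γ, hγ⟩ := Valued.mem_nhds_zero.mp hU
  exact ⟨⟨Valuation.ltAddSubgroup Valued.v.restrict γ, Valued.isOpen_ball _ _⟩, hγ⟩

lemma isClosed_vle (m : ℤ) : IsClosed {x : Kinf F | vle F x m} := by
  have h : {x : Kinf F | vle F x m} = {x : Kinf F | Valued.v.restrict x
      ≤ Valued.v.restrict (HahnSeries.single m (1 : F) : Kinf F)} := by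
    ext x
    simp only [Set.mem_setOf_eq, Valuation.restrict_le_iff, LaurentSeries.valuation_single_zpow,
      vle_iff_v]
  rw [h]
  exact Valued.isClosed_closedBall _ _

lemma tendsto_zero_of_vle {s : ℕ → Kinf F} (h : ∀ m : ℕ, ∀ᶠ k in atTop, vle F (s k) (m : ℤ)) :
    Tendsto s atTop (𝓝 (0 : Kinf F)) := by
  rw [Filter.tendsto_def]
  intro U hU
  obtain ⟨γ, hγ⟩ := Valued.mem_nhds_zero.mp hU
  have hx0 : Valued.v (HahnSeries.single (1 : ℤ) (1 : F) : Kinf F) ≤ WithZero.exp (-1) := by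
    rw [LaurentSeries.valuation_single_zpow]
  obtain ⟨m, hm⟩ := ((Valued.hasBasis_nhds_zero _ _).tendsto_right_iff.mp
    (Valued.tendsto_zero_pow_of_le_exp_neg_one hx0) γ trivial).exists
  refine (h m).mono fun k hk => hγ ?_
  show Valued.v.restrict (s k) < γ.1
  refine lt_of_le_of_lt ?_ hm
  rw [Valuation.restrict_le_iff, map_pow, LaurentSeries.valuation_single_zpow,
    ← WithZero.exp_nsmul]
  convert vle_iff_v.mp hk using 2
  simp

-- ===== integer parts =====
variable (F) in
/-- The "polynomial part in `θ`" of a Laurent series. -/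
def intPoly (x : Kinf F) : Polynomial F :=
  ∑ k ∈ Finset.range ((-x.order).toNat + 1),
    Polynomial.C (x.coeff (-(k : ℤ))) * Polynomial.X ^ k

lemma polyK_CXpow (a : F) (k : ℕ) :
    polyK F (Polynomial.C a * Polynomial.X ^ k) = HahnSeries.single (-(k : ℤ)) a := by
  have h1 : polyK F (Polynomial.C a * Polynomial.X ^ k) = HahnSeries.C a * theta F ^ k := by
    simp [polyK, Polynomial.eval₂_mul, Polynomial.eval₂_C, Polynomial.eval₂_X_pow]
  rw [h1, theta_pow, HahnSeries.C_apply, HahnSeries.single_mul_single, zero_add, mul_one]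

lemma vle_sub_intPoly (x : Kinf F) : vle F (x - polyK F (intPoly F x)) 1 := by
  intro d hd
  have hd0 : d ≤ 0 := by omega
  set M : ℕ := (-x.order).toNat + 1 with hM
  have hcoeff : (polyK F (intPoly F x)).coeff d
      = ∑ k ∈ Finset.range M, ((HahnSeries.single (-(k : ℤ)) (x.coeff (-(k : ℤ)))
          : Kinf F)).coeff d := by
    rw [intPoly, map_sum]
    rw [show ∀ y : Kinf F, y.coeff d = (HahnSeries.coeff.addMonoidHom d) y from fun _ => rfl]
    rw [map_sum]
    refine Finset.sum_congr rfl fun k _ => ?_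
    rw [polyK_CXpow]
    rfl
  rw [HahnSeries.coeff_sub, hcoeff]
  by_cases hdM : (-d).toNat < M
  · rw [Finset.sum_eq_single ((-d).toNat)]
    · rw [HahnSeries.coeff_single,
        if_pos (by rw [Int.toNat_of_nonneg (by omega : (0:ℤ) ≤ -d)]; omega),
        Int.toNat_of_nonneg (by omega : (0:ℤ) ≤ -d), neg_neg, sub_self]
    · intro k _ hk
      rw [HahnSeries.coeff_single, if_neg]
      intro hcon
      exact hk (by omega)
    · intro hcon
      exact absurd (Finset.mem_range.mpr hdM) hcon
  · have hzero : ∀ k ∈ Finset.range M,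
        ((HahnSeries.single (-(k : ℤ)) (x.coeff (-(k : ℤ))) : Kinf F)).coeff d = 0 := by
      intro k hk
      rw [HahnSeries.coeff_single, if_neg]
      intro hcon
      have : k = (-d).toNat := by omega
      exact absurd (Finset.mem_range.mpr (this ▸ Finset.mem_range.mp hk)) (by
        intro h2; exact hdM (Finset.mem_range.mp h2))
    rw [Finset.sum_eq_zero hzero, sub_zero]
    have hlt : d < x.order := by
      have h1 : -x.order ≤ ((-x.order).toNat : ℤ) := Int.self_le_toNat _
      have h2 : ((-d).toNat : ℤ) = -d := Int.toNat_of_nonneg (by omega)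
      have h3 : M ≤ (-d).toNat := by omega
      omega
    exact HahnSeries.coeff_eq_zero_of_lt_order hlt

-- ===== the polynomial part of an element of the Tate algebra =====
variable (F) in
def PP (h : TS F) (N : ℕ) : Polynomial (Polynomial F) :=
  ∑ i ∈ Finset.range N,
    Polynomial.C (intPoly F (PowerSeries.coeff (R := Kinf F) i h)) * Polynomial.X ^ i

lemma polyT_CXpow (P : Polynomial F) (i : ℕ) :
    polyT F (Polynomial.C P * Polynomial.X ^ i)
      = PowerSeries.C (R := Kinf F) (polyK F P) * PowerSeries.X ^ i := by
  simp [polyT, Polynomial.eval₂_mul, Polynomial.eval₂_C, Polynomial.eval₂_X_pow]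

lemma coeff_polyT_PP (h : TS F) (N i : ℕ) :
    PowerSeries.coeff (R := Kinf F) i (polyT F (PP F h N))
      = if i < N then polyK F (intPoly F (PowerSeries.coeff (R := Kinf F) i h)) else 0 := by
  rw [PP, map_sum, map_sum]
  have h1 : ∀ j, PowerSeries.coeff (R := Kinf F) i
      (polyT F (Polynomial.C (intPoly F (PowerSeries.coeff (R := Kinf F) j h)) * Polynomial.X ^ j))
      = if i = j then polyK F (intPoly F (PowerSeries.coeff (R := Kinf F) j h)) else 0 := by
    intro j
    rw [polyT_CXpow, PowerSeries.coeff_C_mul, PowerSeries.coeff_X_pow]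
    split_ifs <;> simp
  by_cases hiN : i < N
  · rw [if_pos hiN, Finset.sum_eq_single i]
    · rw [h1, if_pos rfl]
    · intro j _ hj
      rw [h1, if_neg (Ne.symm hj)]
    · intro hcon
      exact absurd (Finset.mem_range.mpr hiN) hcon
  · rw [if_neg hiN]
    refine Finset.sum_eq_zero fun j hj => ?_
    rw [h1, if_neg]
    intro hcon
    exact hiN (hcon ▸ Finset.mem_range.mp hj)

lemma twist_sum {α : Type*} (t : Finset α) (g : α → TS F) :
    twist F (∑ a ∈ t, g a) = ∑ a ∈ t, twist F (g a) := by
  simp [twist_eq_map, map_sum]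

lemma eventual_vle_mul {u g : TS F} {D : ℕ} {a : ℤ} (hu1 : Bddc F u a) (hu2 : DegLe F u D)
    (hg : ∀ m : ℕ, ∀ᶠ i in atTop, vle F (PowerSeries.coeff (R := Kinf F) i g) (m : ℤ)) (m : ℕ) :
    ∀ᶠ i in atTop, vle F (PowerSeries.coeff (R := Kinf F) i (u * g)) (m : ℤ) := by
  set m' : ℕ := ((m : ℤ) - a).toNat with hm'
  have hm'2 : (m : ℤ) - a ≤ (m' : ℤ) := Int.self_le_toNat _
  obtain ⟨I, hI⟩ := eventually_atTop.mp (hg m')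
  rw [eventually_atTop]
  refine ⟨I + D, fun i hi => ?_⟩
  rw [PowerSeries.coeff_mul]
  refine vle_sum fun pq hpq => ?_
  have hsum : pq.1 + pq.2 = i := Finset.HasAntidiagonal.mem_antidiagonal.mp hpq
  by_cases hp : D < pq.1
  · rw [hu2 _ hp, zero_mul]
    exact vle_zero _
  · have hq : I ≤ pq.2 := by omega
    have h1 := vle_mul (hu1 pq.1) (hI pq.2 hq)
    refine vle_of_le h1 ?_
    have : (0 : ℤ) ≤ (pq.1 : ℤ) := by positivity
    omega

end Aux

/-- Let `n ≥ 0`.  Then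
`K∞⟨t⟩ = (t−θ)^{−n}·𝔽[θ,t] + {g − (t−θ)^{−n} g⁽¹⁾ : g ∈ K∞⟨t⟩}`:
every `f ∈ K∞⟨t⟩` can be written `f = (t−θ)^{−n} p + (g − (t−θ)^{−n} g⁽¹⁾)` with
`p ∈ 𝔽[θ,t]` and `g ∈ K∞⟨t⟩`.  (Equivalently, `Cl(A(n)) = 0` for `n ≥ 0`; the inverse
`(t−θ)^{−n}` is taken in the ring of power series over `K∞`, where `t−θ` is a unit.) -/
theorem statement7 (q n : ℕ) (hq : q = Fintype.card F) :
    ∀ f : TS F, IsTate F f →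
      ∃ p ∈ PolyTT F, ∃ g : TS F, IsTate F g ∧
        f = ((tt F - th F) ^ n)⁻¹ * p + (g - ((tt F - th F) ^ n)⁻¹ * twist F g) := by
  intro f hf
  classical
  set u : TS F := (tt F - th F) ^ n with hu
  have hfv : ∀ m : ℕ, ∀ᶠ i in atTop, vle F (PowerSeries.coeff (R := Kinf F) i f) (m : ℤ) :=
    isTate_iff_vle.mp hf
  have hufv : ∀ m : ℕ, ∀ᶠ i in atTop, vle F (PowerSeries.coeff (R := Kinf F) i (u * f)) (m : ℤ) :=
    fun m => eventual_vle_mul (Bddc_u n) (DegLe_u n) hfv m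
  obtain ⟨N, hN⟩ := eventually_atTop.mp (hufv 1)
  set P : Polynomial (Polynomial F) := PP F (u * f) N with hP
  set p : TS F := polyT F P with hp
  set e : TS F := u * f - p with he
  have he1 : ∀ i : ℕ, vle F (PowerSeries.coeff (R := Kinf F) i e) 1 := by
    intro i
    rw [he, map_sub, hp, hP, coeff_polyT_PP]
    by_cases hiN : i < N
    · rw [if_pos hiN]
      exact vle_sub_intPoly _
    · rw [if_neg hiN, sub_zero]
      exact_mod_cast hN i (by omega)
  have he2 : ∀ m : ℕ, ∀ᶠ i in atTop, vle F (PowerSeries.coeff (R := Kinf F) i e) (m : ℤ) := by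
    intro m
    filter_upwards [hufv m, eventually_ge_atTop N] with i h1 h2
    rw [he, map_sub, hp, hP, coeff_polyT_PP, if_neg (by omega), sub_zero]
    exact h1
  -- the summands of the series defining `g`
  set E : ℕ → TS F := fun k => (twist F)^[k] e with hE
  have hE0 : E 0 = e := rfl
  have hEsucc : ∀ k, E (k + 1) = twist F (E k) := by
    intro k
    rw [hE]
    exact Function.iterate_succ_apply' _ _ _
  have hEcoeff : ∀ k i, PowerSeries.coeff (R := Kinf F) i (E k)
      = (PowerSeries.coeff (R := Kinf F) i e) ^ (Fintype.card F ^ k) := by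
    intro k
    induction k with
    | zero => intro i; simp [hE0]
    | succ k ih =>
        intro i
        rw [hEsucc k, coeff_twist, ih i, ← pow_mul, ← pow_succ]
  set T : ℕ → ℕ → Kinf F := fun i k => PowerSeries.coeff (R := Kinf F) i (E k * Wk F n k) with hT
  -- bound A : `|T i k| ≤ q^{-q^k}`
  have hTA : ∀ i k, vle F (T i k) ((Fintype.card F ^ k : ℕ) : ℤ) := by
    intro i k
    simp only [hT]
    rw [PowerSeries.coeff_mul]
    refine vle_sum fun pq _ => ?_
    have h1 : vle F (PowerSeries.coeff (R := Kinf F) pq.1 (E k)) ((Fintype.card F ^ k : ℕ) : ℤ) := by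
      rw [hEcoeff]
      have := vle_pow (he1 pq.1) (Fintype.card F ^ k)
      simpa using this
    have h2 := Bddc_Wk (F := F) n k pq.2
    refine vle_of_le (vle_mul h1 h2) ?_
    have : (0 : ℤ) ≤ (pq.2 : ℤ) := by positivity
    omega
  -- bound B : uniform decay of `T i k` in `i`
  have hTB : ∀ m : ℕ, ∃ I, ∀ i, I ≤ i → ∀ k, vle F (T i k) (m : ℤ) := by
    intro m
    obtain ⟨A, hA⟩ := eventually_atTop.mp (he2 m)
    refine ⟨A + m, fun i hi k => ?_⟩
    simp only [hT]
    rw [PowerSeries.coeff_mul]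
    refine vle_sum fun pq hpq => ?_
    have hsum : pq.1 + pq.2 = i := Finset.HasAntidiagonal.mem_antidiagonal.mp hpq
    have hq1 : (1 : ℤ) ≤ ((Fintype.card F ^ k : ℕ) : ℤ) := by
      exact_mod_cast Nat.one_le_pow _ _ Fintype.card_pos
    by_cases hcase : A ≤ pq.1
    · have h1 : vle F (PowerSeries.coeff (R := Kinf F) pq.1 (E k))
          (((Fintype.card F ^ k : ℕ) : ℤ) * m) := by
        rw [hEcoeff]
        have := vle_pow (hA pq.1 hcase) (Fintype.card F ^ k)
        simpa [mul_comm] using this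
      have h2 := Bddc_Wk (F := F) n k pq.2
      refine vle_of_le (vle_mul h1 h2) ?_
      have h3 : (0 : ℤ) ≤ (pq.2 : ℤ) := by positivity
      have h4 : (m : ℤ) ≤ ((Fintype.card F ^ k : ℕ) : ℤ) * m := by
        have : (0 : ℤ) ≤ (m : ℤ) := by positivity
        nlinarith
      omega
    · have hb : (m : ℤ) ≤ (pq.2 : ℤ) := by omega
      have h1 : vle F (PowerSeries.coeff (R := Kinf F) pq.1 (E k)) 0 := by
        rw [hEcoeff]
        refine vle_of_le ?_ (by omega : (0:ℤ) ≤ ((Fintype.card F ^ k : ℕ) : ℤ) * 1)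
        have := vle_pow (he1 pq.1) (Fintype.card F ^ k)
        simpa using this
      have h2 := Bddc_Wk (F := F) n k pq.2
      refine vle_of_le (vle_mul h1 h2) (by omega)
  -- the terms tend to `0` in `k`
  have hT0 : ∀ i, Tendsto (fun k => T i k) atTop (nhds (0 : Kinf F)) := by
    intro i
    refine tendsto_zero_of_vle fun m => ?_
    rw [eventually_atTop]
    refine ⟨m, fun k hk => ?_⟩
    refine vle_of_le (hTA i k) ?_
    have h1 : m < Fintype.card F ^ k := by
      calc m ≤ k := hk
      _ < 2 ^ k := Nat.lt_two_pow_self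
      _ ≤ Fintype.card F ^ k := Nat.pow_le_pow_left Fintype.one_lt_card k
    exact_mod_cast h1.le
  have hsum : ∀ i, Summable (fun k => T i k) := by
    intro i
    refine NonarchimedeanAddGroup.summable_of_tendsto_cofinite_zero ?_
    rw [Nat.cofinite_eq_atTop]
    exact hT0 i
  set g : TS F := PowerSeries.mk (fun i => ∑' k, T i k) with hg
  have hgc : ∀ i, PowerSeries.coeff (R := Kinf F) i g = ∑' k, T i k := by
    intro i
    rw [hg, PowerSeries.coeff_mk]
  have hglim : ∀ i, Tendsto (fun N' => ∑ k ∈ Finset.range N', T i k) atTop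
      (nhds (PowerSeries.coeff (R := Kinf F) i g)) := by
    intro i
    rw [hgc]
    exact (hsum i).hasSum.tendsto_sum_nat
  set s : ℕ → TS F := fun N' => ∑ k ∈ Finset.range N', E k * Wk F n k with hs
  have hscoeff : ∀ N' i, PowerSeries.coeff (R := Kinf F) i (s N') = ∑ k ∈ Finset.range N', T i k := by
    intro N' i
    rw [hs, map_sum]
  -- `u * Wk n 0 = 1`
  have huW0 : u * Wk F n 0 = 1 := by
    have h1 : Uk F n 0 = u := by
      rw [Uk, hu, Finset.range_one, Finset.prod_singleton, ← th_eq]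
    rw [← h1, Uk_mul_Wk]
  -- telescoping identity
  have htel : ∀ N', u * s N' - twist F (s N') = e - u * (E N' * Wk F n N') := by
    intro N'
    have h1 : ∀ k, twist F (E k * Wk F n k) = u * (E (k + 1) * Wk F n (k + 1)) := by
      intro k
      rw [twist_mul, twist_Wk, ← hEsucc, ← hu]
      ring
    rw [hs, twist_sum, Finset.mul_sum]
    have h2 : ∑ k ∈ Finset.range N', twist F (E k * Wk F n k)
        = ∑ k ∈ Finset.range N', u * (E (k + 1) * Wk F n (k + 1)) :=
      Finset.sum_congr rfl fun k _ => h1 k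
    rw [h2, ← Finset.sum_sub_distrib]
    have h3 : ∀ k, u * (E k * Wk F n k) - u * (E (k + 1) * Wk F n (k + 1))
        = (fun j => u * (E j * Wk F n j)) k - (fun j => u * (E j * Wk F n j)) (k + 1) :=
      fun k => rfl
    rw [Finset.sum_congr rfl fun k _ => h3 k, Finset.sum_range_sub']
    rw [hE0]
    have h4 : u * (e * Wk F n 0) = e := by
      calc u * (e * Wk F n 0) = e * (u * Wk F n 0) := by ring
      _ = e := by rw [huW0, mul_one]
    rw [h4]
  -- passing to the limit
  have hkey : u * g - twist F g = e := by
    refine PowerSeries.ext fun i => ?_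
    have l1 : Tendsto (fun N' => PowerSeries.coeff (R := Kinf F) i (u * s N' - twist F (s N')))
        atTop (nhds (PowerSeries.coeff (R := Kinf F) i (u * g - twist F g))) := by
      simp only [map_sub]
      refine Tendsto.sub ?_ ?_
      · simp only [PowerSeries.coeff_mul]
        refine tendsto_finset_sum _ fun pq _ => ?_
        exact Tendsto.const_mul _ (by simpa only [hscoeff] using hglim pq.2)
      · simp only [coeff_twist]
        exact Tendsto.pow (by simpa only [hscoeff] using hglim i) _
    have l2 : Tendsto (fun N' => PowerSeries.coeff (R := Kinf F) i (u * s N' - twist F (s N')))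
        atTop (nhds (PowerSeries.coeff (R := Kinf F) i e)) := by
      have l3 : Tendsto (fun N' => PowerSeries.coeff (R := Kinf F) i (u * (E N' * Wk F n N')))
          atTop (nhds (0 : Kinf F)) := by
        have l4 : ∀ N', PowerSeries.coeff (R := Kinf F) i (u * (E N' * Wk F n N'))
            = ∑ pq ∈ Finset.HasAntidiagonal.antidiagonal i,
                PowerSeries.coeff (R := Kinf F) pq.1 u * T pq.2 N' := by
          intro N'
          rw [PowerSeries.coeff_mul]
        simp only [l4]
        have : (0 : Kinf F) = ∑ pq ∈ Finset.HasAntidiagonal.antidiagonal i,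
            PowerSeries.coeff (R := Kinf F) pq.1 u * 0 := by simp
        rw [this]
        exact tendsto_finset_sum _ fun pq _ => Tendsto.const_mul _ (hT0 pq.2)
      have l5 : ∀ N', PowerSeries.coeff (R := Kinf F) i (u * s N' - twist F (s N'))
          = PowerSeries.coeff (R := Kinf F) i e
            - PowerSeries.coeff (R := Kinf F) i (u * (E N' * Wk F n N')) := by
        intro N'
        rw [htel N', map_sub]
      simp only [l5]
      have := Tendsto.sub (tendsto_const_nhds
        (x := PowerSeries.coeff (R := Kinf F) i e) (f := atTop)) l3
      simpa using this
    exact tendsto_nhds_unique l1 l2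
  -- `g` is in the Tate algebra
  have hgTate : IsTate F g := by
    rw [isTate_iff_vle]
    intro m
    obtain ⟨I, hI⟩ := hTB m
    rw [eventually_atTop]
    refine ⟨I, fun i hi => ?_⟩
    have hmem : ∀ N', (∑ k ∈ Finset.range N', T i k) ∈ {x : Kinf F | vle F x (m : ℤ)} :=
      fun N' => vle_sum fun k _ => hI i hi k
    have := (isClosed_vle (F := F) (m : ℤ)).mem_of_tendsto (hglim i)
      (Filter.Eventually.of_forall hmem)
    exact this
  -- the inverse of `u`
  have hconst : PowerSeries.constantCoeff (R := Kinf F) u ≠ 0 := by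
    rw [hu, map_pow]
    apply pow_ne_zero
    rw [map_sub, tt, th, PowerSeries.constantCoeff_X, PowerSeries.constantCoeff_C, zero_sub,
      neg_ne_zero]
    exact theta_ne_zero
  set w : TS F := (winv F (theta F)) ^ n with hw
  have hwu : w * u = 1 := by
    rw [hw, hu, ← mul_pow, mul_comm (winv F (theta F)), th]
    rw [winv_mul theta_ne_zero, one_pow]
  have hinv : w = u⁻¹ := (PowerSeries.eq_inv_iff_mul_eq_one hconst).mpr hwu
  refine ⟨p, ⟨P, hp.symm⟩, g, hgTate, ?_⟩
  rw [← hinv]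
  have hfin : u * f = p + (u * g - twist F g) := by
    rw [hkey, he]
    ring
  calc f = (w * u) * f := by rw [hwu, one_mul]
  _ = w * (u * f) := by ring
  _ = w * (p + (u * g - twist F g)) := by rw [hfin]
  _ = w * p + ((w * u) * g - w * twist F g) := by ring
  _ = w * p + (g - w * twist F g) := by rw [hwu, one_mul]


end Carlitz
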